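/- Let N ≥ 2 and let A_1,…,A_N be finite nonempty sets with 𝒜 := ∏_{k=1}^N A_k, and let s_j : 𝒜 → ℝ. The Imitate-If-Better strategy of player (1,j) is unbeatable against player (2,j) — i.e. for every play consistent with IIB, liminf_{T→∞} (1/T) ∑_{t=1}^T (s_j(a^{(t)}_1) − s_j(a^{(t)}_2)) ≥ 0 — if and only if the stage game is a strongly payoff-monotonic game for player (1,j). -/

import Mathlib

/-- Theorem 2 of the paper: the Imitate-If-Better strategy of player
`(1, j)` is unbeatable against player `(2, j)` iff the stage game is a strongly
payoff-monotonic game for player `(1, j)`.  Rounds are indexed so that `a t` is the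
full action profile of round `t + 1`. -/
theorem IIB_unbeatable_iff_strongly_payoff_monotonic
    {N : ℕ} (hN : 2 ≤ N) (A : Fin N → Type*)
    [∀ k, Fintype (A k)] [∀ k, Nonempty (A k)]
    (j : Fin N) (s : (∀ k, A k) → ℝ) :
    (∀ a : ℕ → ((∀ k, A k) × (∀ k, A k)),
      (∀ t, (a (t + 1)).1 j =
          if s (a t).1 < s (a t).2 then (a t).2 j else (a t).1 j) →
      0 ≤ Filter.liminf
          (fun T : ℕ => (∑ t ∈ Finset.range T, (s (a t).1 - s (a t).2)) / T)
          Filter.atTop) ↔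
    (∃ r : A j → ℝ, ∀ b : ∀ k, A k, s b = r (b j)) := by
  constructor
  · intro H
    -- key claim: s depends only on coordinate j
    have key : ∀ b b' : (∀ k, A k), b j = b' j → s b = s b' := by
      have main : ∀ b b' : (∀ k, A k), b j = b' j → ¬ s b < s b' := by
        intro b b' hj hlt
        set a : ℕ → ((∀ k, A k) × (∀ k, A k)) := fun _ => (b, b') with ha
        have hcons : ∀ t, (a (t + 1)).1 j =
            if s (a t).1 < s (a t).2 then (a t).2 j else (a t).1 j := by
          intro t
          simp only [ha, if_pos hlt]
          exact hj
        have hli := H a hcons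
        have hev : (fun T : ℕ => (∑ t ∈ Finset.range T, (s (a t).1 - s (a t).2)) / T)
            =ᶠ[Filter.atTop] (fun _ => s b - s b') := by
          filter_upwards [Filter.eventually_ge_atTop 1] with T hT
          have hT0 : (T : ℝ) ≠ 0 := by positivity
          simp only [ha, Finset.sum_const, Finset.card_range, nsmul_eq_mul]
          field_simp
        rw [Filter.liminf_congr hev, Filter.liminf_const] at hli
        linarith
      intro b b' hj
      rcases lt_trichotomy (s b) (s b') with h | h | h
      · exact absurd h (main b b' hj)
      · exact h
      · exact absurd h (main b' b hj.symm)
    refine ⟨fun x => s (Function.update (Classical.arbitrary _) j x), fun b => ?_⟩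
    exact key b _ (by simp)
  · rintro ⟨r, hr⟩ a hcons
    set g : ℕ → ℝ := fun t => r ((a t).1 j) with hg
    have hs1 : ∀ t, s (a t).1 = g t := fun t => hr _
    have hs2 : ∀ t, s (a t).2 = r ((a t).2 j) := fun t => hr _
    -- each term is at least the telescoping decrement
    have hstep : ∀ t, g t - g (t + 1) ≤ s (a t).1 - s (a t).2 := by
      intro t
      have h := hcons t
      by_cases hlt : s (a t).1 < s (a t).2
      · rw [if_pos hlt] at h
        have : g (t + 1) = r ((a t).2 j) := by rw [hg]; simp [h]
        rw [hs1, hs2, this]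
      · rw [if_neg hlt] at h
        have hgg : g (t + 1) = g t := by rw [hg]; simp [h]
        rw [hs1, hs2, hgg]
        push_neg at hlt
        have : r ((a t).2 j) ≤ g t := by rw [← hs1, ← hs2]; exact hlt
        linarith
    -- a uniform upper bound on g
    obtain ⟨x0, hx0⟩ := Finite.exists_max r
    set C : ℝ := g 0 - r x0 with hC
    have hsum : ∀ T, C ≤ ∑ t ∈ Finset.range T, (s (a t).1 - s (a t).2) := by
      intro T
      calc C ≤ g 0 - g T := by
              have := hx0 ((a T).1 j); simp only [hC, hg] at *; linarith
        _ = ∑ t ∈ Finset.range T, (g t - g (t + 1)) := (Finset.sum_range_sub' g T).symm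
        _ ≤ _ := Finset.sum_le_sum fun t _ => hstep t
    have hle : ∀ T : ℕ, C / (T : ℝ) ≤
        (∑ t ∈ Finset.range T, (s (a t).1 - s (a t).2)) / T := by
      intro T
      rcases Nat.eq_zero_or_pos T with h | h
      · simp [h]
      · have hTpos : (0:ℝ) < T := by exact_mod_cast h
        gcongr
        exact hsum T
    have htend : Filter.Tendsto (fun T : ℕ => C / (T : ℝ)) Filter.atTop (nhds 0) :=
      Filter.Tendsto.div_atTop tendsto_const_nhds tendsto_natCast_atTop_atTop
    have h0 : Filter.liminf (fun T : ℕ => C / (T : ℝ)) Filter.atTop = 0 :=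
      htend.liminf_eq
    rw [← h0]
    have hbu : Filter.IsBoundedUnder (· ≥ ·) Filter.atTop (fun T : ℕ => C / (T : ℝ)) :=
      htend.isBoundedUnder_ge
    have hbv : Filter.IsCoboundedUnder (· ≥ ·) Filter.atTop
        (fun T : ℕ => (∑ t ∈ Finset.range T, (s (a t).1 - s (a t).2)) / T) := by
      obtain ⟨bM, hbM⟩ := Finite.exists_max s
      obtain ⟨bm, hbm⟩ := Finite.exists_min s
      refine Filter.isCoboundedUnder_ge_of_le _ (x := s bM - s bm) fun T => ?_
      rcases Nat.eq_zero_or_pos T with h | h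
      · simp [h]
        linarith [hbM bm, hbm bM]
      · have hTpos : (0:ℝ) < T := by exact_mod_cast h
        rw [div_le_iff₀ hTpos]
        calc ∑ t ∈ Finset.range T, (s (a t).1 - s (a t).2)
            ≤ ∑ _t ∈ Finset.range T, (s bM - s bm) :=
              Finset.sum_le_sum fun t _ => by linarith [hbM (a t).1, hbm (a t).2]
          _ = (s bM - s bm) * T := by
              simp [Finset.sum_const, mul_comm]
              ring
    exact Filter.liminf_le_liminf (Filter.Eventually.of_forall hle) hbu hbv
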